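/- Let r ≥ 1 and n ≥ 1 be integers and let f be a uniformly distributed random Boolean function on 𝔽₂ⁿ. Then E[ 2ⁿ − 2·N_r(f) ] ≤ √( 2^{n+1} · (1 + C(n,1) + C(n,2) + ⋯ + C(n,r)) · log 2 ). -/

import Mathlib

open MeasureTheory ProbabilityTheory Filter Real

noncomputable section

/-- Boolean functions on `𝔽₂ⁿ`. -/
abbrev BF (n : ℕ) := (Fin n → ZMod 2) → ZMod 2

/-- Hamming distance between Boolean functions. -/
def hdist {n : ℕ} (f g : BF n) : ℕ := Nat.card {x : Fin n → ZMod 2 | f x ≠ g x}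

/-- Weight of a Boolean function. -/
def wt {n : ℕ} (g : BF n) : ℕ := Nat.card {x : Fin n → ZMod 2 | g x ≠ 0}

/-- The Reed–Muller code `RM(r,n)`: Boolean functions of degree at most `r`. -/
def RM (r n : ℕ) : Set (BF n) :=
  {g | ∃ p : MvPolynomial (Fin n) (ZMod 2),
    p.totalDegree ≤ r ∧ ∀ x, MvPolynomial.eval x p = g x}

/-- The `r`-th order nonlinearity of a Boolean function. -/
def nonlin (r : ℕ) {n : ℕ} (f : BF n) : ℕ := sInf (hdist f '' RM r n)

/-- Extend `x ∈ 𝔽₂ⁿ` to a finitely supported sequence `(x₁,…,xₙ,0,0,…)`. -/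
def extend {n : ℕ} (x : Fin n → ZMod 2) : ℕ →₀ ZMod 2 :=
  ∑ i : Fin n, Finsupp.single (i : ℕ) (x i)

/-! ### Auxiliary lemmas -/

lemma zmod2_pow {a : ZMod 2} {k : ℕ} (hk : k ≠ 0) : a ^ k = a := by
  fin_cases a
  · exact zero_pow hk
  · exact one_pow k

/-- The Reed–Muller code has at most `2 ^ (∑_{i ≤ r} C(n,i))` elements. -/
lemma card_RM_le (r n : ℕ) :
    Nat.card (RM r n) ≤ 2 ^ (∑ i ∈ Finset.range (r+1), n.choose i) := by
  classical
  set A : Finset (Finset (Fin n)) := Finset.univ.filter (fun s => s.card ≤ r) with hA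
  set Ψ : (A → ZMod 2) → BF n :=
    fun c => (fun x => ∑ s ∈ A.attach, c s * ∏ i ∈ s.1, x i) with hΨ
  have hsub : RM r n ⊆ Set.range Ψ := by
    rintro g ⟨p, hdeg, hev⟩
    refine ⟨fun s => ∑ d ∈ p.support.filter (fun d => d.support = s.1), p.coeff d, ?_⟩
    funext x
    rw [hΨ]
    simp only
    rw [← hev x, MvPolynomial.eval_eq]
    have hmap : ∀ d ∈ p.support, d.support ∈ A := by
      intro d hd
      simp only [hA, Finset.mem_filter, Finset.mem_univ, true_and]
      calc d.support.card = ∑ _i ∈ d.support, 1 := by simp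
        _ ≤ ∑ i ∈ d.support, d i :=
            Finset.sum_le_sum (fun i hi => Nat.one_le_iff_ne_zero.2 (Finsupp.mem_support_iff.1 hi))
        _ ≤ p.totalDegree := MvPolynomial.le_totalDegree hd
        _ ≤ r := hdeg
    calc ∑ s ∈ A.attach, (∑ d ∈ p.support.filter (fun d => d.support = s.1), p.coeff d) * ∏ i ∈ s.1, x i
        = ∑ s ∈ A, ∑ d ∈ p.support.filter (fun d => d.support = s), p.coeff d * ∏ i ∈ d.support, x i := by
          rw [← Finset.sum_attach A (fun s => ∑ d ∈ p.support.filter (fun d => d.support = s),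
            p.coeff d * ∏ i ∈ d.support, x i)]
          refine Finset.sum_congr rfl (fun s _ => ?_)
          rw [Finset.sum_mul]
          refine Finset.sum_congr rfl (fun d hd => ?_)
          rw [(Finset.mem_filter.1 hd).2]
      _ = ∑ d ∈ p.support, p.coeff d * ∏ i ∈ d.support, x i :=
          Finset.sum_fiberwise_of_maps_to hmap _
      _ = ∑ d ∈ p.support, p.coeff d * ∏ i ∈ d.support, x i ^ d i := by
          refine Finset.sum_congr rfl (fun d hd => ?_)
          congr 1
          refine Finset.prod_congr rfl (fun i hi => ?_)
          exact (zmod2_pow (Finsupp.mem_support_iff.1 hi)).symm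
  have h1 : Nat.card (RM r n) ≤ Nat.card (Set.range Ψ) := Nat.card_mono (Set.toFinite _) hsub
  have h2 : Nat.card (Set.range Ψ) ≤ Nat.card (A → ZMod 2) := Finite.card_range_le _
  have h3 : Nat.card (A → ZMod 2) = 2 ^ A.card := by
    rw [Nat.card_eq_fintype_card, Fintype.card_fun]
    simp
  have hAcard : A.card = ∑ i ∈ Finset.range (r+1), n.choose i := by
    have hbi : A = (Finset.range (r+1)).biUnion (fun i => Finset.powersetCard i Finset.univ) := by
      ext s
      simp only [hA, Finset.mem_filter, Finset.mem_univ, true_and, Finset.mem_biUnion,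
        Finset.mem_range, Finset.mem_powersetCard_univ, Nat.lt_succ_iff]
      constructor
      · intro h; exact ⟨s.card, h, rfl⟩
      · rintro ⟨i, hi, rfl⟩; exact hi
    rw [hbi, Finset.card_biUnion]
    · exact Finset.sum_congr rfl fun i _ => by simp
    · intro i _ j _ hij
      refine Finset.disjoint_left.2 (fun s hs hs' => ?_)
      rw [Finset.mem_powersetCard_univ] at hs hs'
      exact hij (hs ▸ hs')
  calc Nat.card (RM r n) ≤ Nat.card (Set.range Ψ) := h1
    _ ≤ Nat.card (A → ZMod 2) := h2
    _ = 2 ^ A.card := h3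
    _ = 2 ^ (∑ i ∈ Finset.range (r+1), n.choose i) := by rw [hAcard]

/-- The correlation formula for the Hamming distance. -/
lemma hdist_eq (n : ℕ) (f g : BF n) :
    ((2:ℝ)^n) - 2 * hdist f g = ∑ x : Fin n → ZMod 2, (if f x = g x then (1:ℝ) else -1) := by
  classical
  have hcard : hdist f g = (Finset.univ.filter (fun x => f x ≠ g x)).card := by
    rw [hdist, Nat.card_eq_fintype_card]
    exact Fintype.card_subtype _
  have hpt : ∀ x, (if f x = g x then (1:ℝ) else -1)
      = 1 - 2 * (if f x ≠ g x then (1:ℝ) else 0) := by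
    intro x; by_cases h : f x = g x <;> simp [h] <;> norm_num
  simp_rw [hpt]
  rw [Finset.sum_sub_distrib, Finset.sum_const, ← Finset.mul_sum, Finset.sum_boole]
  have hcu : (Finset.univ : Finset (Fin n → ZMod 2)).card = 2 ^ n := by
    simp [Finset.card_univ]
  rw [hcard, hcu]
  push_cast
  ring

/-- The moment generating function computation. -/
lemma mgf_eq (n : ℕ) (g : BF n) (t : ℝ) :
    ∑ f : BF n, Real.exp (t * ∑ x, (if f x = g x then (1:ℝ) else -1))
      = (Real.exp t + Real.exp (-t)) ^ (2^n) := by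
  classical
  have hsplit : ∀ f : BF n, Real.exp (t * ∑ x, (if f x = g x then (1:ℝ) else -1))
      = ∏ x, Real.exp (t * (if f x = g x then (1:ℝ) else -1)) := by
    intro f; rw [← Real.exp_sum, Finset.mul_sum]
  simp_rw [hsplit]
  have hpi : (Finset.univ : Finset (BF n)) = Fintype.piFinset (fun _ => Finset.univ) :=
    (Fintype.piFinset_univ).symm
  rw [hpi, ← Finset.prod_univ_sum (fun _ : Fin n → ZMod 2 => (Finset.univ : Finset (ZMod 2)))
    (fun x b => Real.exp (t * (if b = g x then (1:ℝ) else -1)))]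
  have hx : ∀ c : ZMod 2, ∑ b : ZMod 2, Real.exp (t * (if b = c then (1:ℝ) else -1))
      = Real.exp t + Real.exp (-t) := by
    intro c
    have huniv : (Finset.univ : Finset (ZMod 2)) = {0, 1} := by decide
    rw [huniv, Finset.sum_insert (by decide), Finset.sum_singleton]
    have hm : t * -1 = -t := by ring
    rcases (show c = 0 ∨ c = 1 by revert c; decide) with h | h <;> subst h
    · rw [if_pos rfl, if_neg (by decide), mul_one, hm]
    · rw [if_neg (by decide), if_pos rfl, mul_one, hm, add_comm]
  simp_rw [hx]
  rw [Finset.prod_const]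
  congr 1
  simp [Finset.card_univ]

theorem stmt7 (r n : ℕ) (hr : 1 ≤ r) (hn : 1 ≤ n) :
    (∑ g : BF n, ((2^n : ℝ) - 2 * nonlin r g)) / 2^(2^n)
      ≤ Real.sqrt (2^(n+1) * (∑ i ∈ Finset.range (r+1), (n.choose i : ℝ)) * Real.log 2) := by
  classical
  set S : ℝ := (2:ℝ)^n with hSdef
  set N : ℝ := (2:ℝ)^(2^n) with hNdef
  set Knat : ℕ := ∑ i ∈ Finset.range (r+1), n.choose i with hKdef
  set L : ℝ := (Knat : ℝ) * Real.log 2 with hLdef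
  have hS : (0:ℝ) < S := by positivity
  have hN : (0:ℝ) < N := by positivity
  have hK1 : 1 ≤ Knat := by
    calc 1 = n.choose 0 := (Nat.choose_zero_right n).symm
      _ ≤ Knat := Finset.single_le_sum (f := fun i => n.choose i)
          (fun i _ => Nat.zero_le _) (Finset.mem_range.2 (Nat.succ_pos r))
  have hlog2 : 0 < Real.log 2 := Real.log_pos one_lt_two
  have hKR : (1:ℝ) ≤ (Knat : ℝ) := by exact_mod_cast hK1
  have hL : 0 < L := by
    rw [hLdef]; exact mul_pos (by linarith) hlog2
  set lam : ℝ := Real.sqrt (2 * L / S) with hlamdef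
  have hlampos : 0 < lam := Real.sqrt_pos.2 (by positivity)
  have hlamsq : lam ^ 2 = 2 * L / S := Real.sq_sqrt (by positivity)
  -- the Reed–Muller code as a finset
  have hfin : (RM r n).Finite := Set.toFinite _
  set G : Finset (BF n) := hfin.toFinset with hGdef
  have hzero : (fun _ => (0:ZMod 2)) ∈ RM r n := ⟨0, by simp, fun x => by simp⟩
  have hGcard : (G.card : ℝ) ≤ (2:ℝ) ^ Knat := by
    have h1 : Nat.card (RM r n) ≤ 2 ^ Knat := card_RM_le r n
    have h2 : G.card = Nat.card (RM r n) := by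
      rw [hGdef, ← Set.ncard_eq_toFinset_card (RM r n) hfin, Nat.card_coe_set_eq]
    rw [h2]
    exact_mod_cast h1
  -- pointwise bound: the inf is attained, so exp of it is at most the sum over G
  have hpt : ∀ f : BF n, Real.exp (lam * (S - 2 * nonlin r f))
      ≤ ∑ g ∈ G, Real.exp (lam * (S - 2 * hdist f g)) := by
    intro f
    have hne : (hdist f '' RM r n).Nonempty := ⟨_, Set.mem_image_of_mem _ hzero⟩
    obtain ⟨g, hgRM, hgd⟩ := Nat.sInf_mem hne
    have heq : Real.exp (lam * (S - 2 * (nonlin r f : ℝ)))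
        = Real.exp (lam * (S - 2 * (hdist f g : ℝ))) := by
      rw [nonlin, ← hgd]
    rw [heq]
    exact Finset.single_le_sum (f := fun g => Real.exp (lam * (S - 2 * (hdist f g : ℝ))))
      (fun i _ => (Real.exp_pos _).le) (show g ∈ G from hfin.mem_toFinset.2 hgRM)
  -- MGF bound for each codeword
  have hmgf : ∀ g ∈ G, ∑ f : BF n, Real.exp (lam * (S - 2 * hdist f g))
      ≤ N * Real.exp (S * lam^2 / 2) := by
    intro g _
    calc ∑ f : BF n, Real.exp (lam * (S - 2 * (hdist f g : ℝ)))
        = ∑ f : BF n, Real.exp (lam * ∑ x, (if f x = g x then (1:ℝ) else -1)) := by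
          refine Finset.sum_congr rfl fun f _ => by rw [hSdef, hdist_eq n f g]
      _ = (Real.exp lam + Real.exp (-lam)) ^ (2^n) := mgf_eq n g lam
      _ ≤ (2 * Real.exp (lam^2/2)) ^ (2^n) := by
          apply pow_le_pow_left₀ (by positivity)
          have hc := Real.cosh_le_exp_half_sq lam
          rw [Real.cosh_eq] at hc
          linarith
      _ = N * Real.exp (S * lam^2 / 2) := by
          rw [mul_pow, ← Real.exp_nat_mul]
          have harg : ((2^n : ℕ) : ℝ) * (lam^2/2) = S * lam^2 / 2 := by
            rw [hSdef]; push_cast; ring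
          rw [harg, hNdef]
  -- AM–GM step
  have hcardB : ((Finset.univ : Finset (BF n)).card : ℝ) = N := by
    rw [Finset.card_univ, hNdef]
    simp [Fintype.card_fun]
  have hAM : Real.exp (lam * ((∑ f : BF n, (S - 2 * (nonlin r f : ℝ))) / N))
      ≤ ∑ f : BF n, (1/N) * Real.exp (lam * (S - 2 * (nonlin r f : ℝ))) := by
    have hw : ∑ _f : BF n, (1/N : ℝ) = 1 := by
      rw [Finset.sum_const, nsmul_eq_mul, hcardB]
      field_simp
    have hgm := Real.geom_mean_le_arith_mean_weighted Finset.univ (fun _ : BF n => 1/N)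
      (fun f => Real.exp (lam * (S - 2 * (nonlin r f : ℝ)))) (fun _ _ => by positivity) hw
      (fun _ _ => (Real.exp_pos _).le)
    refine le_trans (le_of_eq ?_) hgm
    calc Real.exp (lam * ((∑ f : BF n, (S - 2 * (nonlin r f : ℝ))) / N))
        = Real.exp (∑ f : BF n, (lam * (S - 2 * (nonlin r f : ℝ))) * (1/N)) := by
          congr 1
          rw [← Finset.sum_mul, ← Finset.mul_sum]
          ring
      _ = ∏ f : BF n, Real.exp ((lam * (S - 2 * (nonlin r f : ℝ))) * (1/N)) :=
          Real.exp_sum _ _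
      _ = ∏ f : BF n, Real.exp (lam * (S - 2 * (nonlin r f : ℝ))) ^ ((1:ℝ)/N) := by
          refine Finset.prod_congr rfl fun f _ => Real.exp_mul _ _
  -- chain
  have hchain : Real.exp (lam * ((∑ f : BF n, (S - 2 * (nonlin r f : ℝ))) / N))
      ≤ (2:ℝ)^Knat * Real.exp (S * lam^2 / 2) := by
    refine hAM.trans ?_
    calc ∑ f : BF n, (1/N) * Real.exp (lam * (S - 2 * (nonlin r f : ℝ)))
        ≤ ∑ f : BF n, (1/N) * (∑ g ∈ G, Real.exp (lam * (S - 2 * hdist f g))) :=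
          Finset.sum_le_sum fun f _ => mul_le_mul_of_nonneg_left (hpt f) (by positivity)
      _ = (1/N) * ∑ g ∈ G, ∑ f : BF n, Real.exp (lam * (S - 2 * hdist f g)) := by
          rw [← Finset.mul_sum, Finset.sum_comm]
      _ ≤ (1/N) * ∑ _g ∈ G, (N * Real.exp (S * lam^2 / 2)) :=
          mul_le_mul_of_nonneg_left (Finset.sum_le_sum hmgf) (by positivity)
      _ = G.card * Real.exp (S * lam^2 / 2) := by
          rw [Finset.sum_const, nsmul_eq_mul]
          field_simp
      _ ≤ (2:ℝ)^Knat * Real.exp (S * lam^2 / 2) :=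
          mul_le_mul_of_nonneg_right hGcard (Real.exp_pos _).le
  -- take logarithms
  have hsl : S * lam^2 / 2 = L := by
    rw [hlamsq]
    field_simp
  have hlog : lam * ((∑ f : BF n, (S - 2 * (nonlin r f : ℝ))) / N) ≤ 2 * L := by
    have hpos : (0:ℝ) < (2:ℝ)^Knat * Real.exp (S * lam^2 / 2) := by positivity
    have hle := (Real.le_log_iff_exp_le hpos).2 hchain
    rw [Real.log_mul (by positivity) (Real.exp_ne_zero _), Real.log_pow, Real.log_exp,
      hsl] at hle
    calc lam * ((∑ f : BF n, (S - 2 * (nonlin r f : ℝ))) / N)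
        ≤ (Knat : ℝ) * Real.log 2 + L := hle
      _ = 2 * L := by rw [hLdef]; ring
  -- optimize
  have hfinal : lam * Real.sqrt (2 * S * L) = 2 * L := by
    rw [hlamdef, ← Real.sqrt_mul (by positivity)]
    rw [show (2 * L / S) * (2 * S * L) = (2*L)^2 by field_simp]
    exact Real.sqrt_sq (by positivity)
  have hmain : (∑ f : BF n, (S - 2 * (nonlin r f : ℝ))) / N ≤ Real.sqrt (2 * S * L) :=
    le_of_mul_le_mul_left (hlog.trans_eq hfinal.symm) hlampos
  have hRHS : Real.sqrt (2 * S * L)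
      = Real.sqrt (2^(n+1) * (∑ i ∈ Finset.range (r+1), (n.choose i : ℝ)) * Real.log 2) := by
    congr 1
    rw [hLdef, hSdef, hKdef]
    push_cast
    ring
  exact hRHS ▸ hmain
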